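/- arXiv:1708.09854 — 2 statements merged into one kernel-verified Lean document; each statement's English description precedes it below -/
import Mathlib

section
/- If f : X → X is not injective (or not surjective), then the sandwich semigroup (C(X,X), *_f) has no identity element: there is no e with e *_f g = g and g *_f e = g for all continuous g. -/
/-- The sandwich product `g₁ *_f g₂ = g₁ ∘ f ∘ g₂` on continuous self-maps. -/
def sandwich {X : Type*} [TopologicalSpace X] (f g₁ g₂ : C(X, X)) : C(X, X) :=
  g₁.comp (f.comp g₂)

/-- if the continuous map `f : X → X` is not a bijection, then the
sandwich semigroup `(C(X,X), *_f)` has no identity element. -/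
theorem sandwich_no_identity {X : Type*} [TopologicalSpace X] [Nontrivial X]
    (f : C(X, X)) (hf : ¬ Function.Bijective f) :
    ¬ ∃ e : C(X, X), ∀ g : C(X, X), sandwich f e g = g ∧ sandwich f g e = g := by
  rintro ⟨e, he⟩
  obtain ⟨h1, h2⟩ := he (ContinuousMap.id X)
  apply hf
  constructor
  · intro a b hab
    have ha := congrFun (congrArg DFunLike.coe h1) a
    have hb := congrFun (congrArg DFunLike.coe h1) b
    simp [sandwich] at ha hb
    rw [← ha, ← hb, hab]
  · intro y
    exact ⟨e y, congrFun (congrArg DFunLike.coe h2) y⟩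
end

section
/- Let ρ : (Rat, *_{R₁}) → (Rat, *_{R₂}) be a sandwich-semigroup isomorphism between the sandwich semigroups of rational maps associated with nonconstant rational maps R₁, R₂. Then for every Möbius transformation M ∈ PSL(2,ℂ), the image ρ(M) is a rational map of degree 1, i.e., a Möbius transformation. -/
open OnePoint

noncomputable section

/-- The Riemann sphere, modeled as the one-point compactification of `ℂ`. -/
local notation "ℂ∞" => OnePoint ℂ

/-- `F : ℂ∞ → ℂ∞` is a rational self-map of the Riemann sphere (constants,
including the constant `∞`, are allowed): `F` is continuous and is given away
from the poles by a quotient of polynomials. -/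
def IsRatMap (F : OnePoint ℂ → OnePoint ℂ) : Prop :=
  Continuous F ∧
    ((∀ z, F z = (∞ : OnePoint ℂ)) ∨
      ∃ p q : Polynomial ℂ, q ≠ 0 ∧
        ∀ z : ℂ, q.eval z ≠ 0 →
          F (z : OnePoint ℂ) = (((p.eval z / q.eval z : ℂ)) : OnePoint ℂ))

/-- A Möbius transformation: a rational homeomorphic self-equivalence of the
sphere with rational inverse (equivalently, an element of `PSL(2,ℂ)`). -/
def IsMobius (γ : OnePoint ℂ ≃ OnePoint ℂ) : Prop :=
  IsRatMap ⇑γ ∧ IsRatMap ⇑γ.symm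

/-- The (topological) degree of a rational map, realized as the supremum of the
cardinalities of its fibers: for a nonconstant rational map every fiber is finite
of cardinality at most `d` and a generic fiber has exactly `d` points. -/
def sphDeg (F : OnePoint ℂ → OnePoint ℂ) : ℕ :=
  sSup {n : ℕ | ∃ y : OnePoint ℂ, ∃ s : Finset (OnePoint ℂ),
    s.card = n ∧ ∀ z ∈ s, F z = y}

open Filter Polynomial Topology

/-- push a ℂ-limit through coe -/
lemma toc {g : ℂ → ℂ} {l : Filter ℂ} {w : ℂ} (h : Tendsto g l (nhds w)) :
    Tendsto (fun z => ((g z : ℂ∞))) l (nhds (w : ℂ∞)) :=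
  (OnePoint.continuous_coe.tendsto w).comp h

/-- norm → ∞ gives limit ∞ in onepoint -/
lemma toe {g : ℂ → ℂ} {l : Filter ℂ} (h : Tendsto (fun z => ‖g z‖) l atTop) :
    Tendsto (fun z => ((g z : ℂ∞))) l (nhds (∞ : ℂ∞)) := by
  have h1 : Tendsto g l (cocompact ℂ) := by
    rw [← Metric.cobounded_eq_cocompact]
    exact tendsto_norm_atTop_iff_cobounded.mp h
  exact (OnePoint.tendsto_coe_infty.mono_left cocompact_le_coclosedCompact).comp h1

/-- value of a continuous map at a finite point, from a punctured-nbhd limit -/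
lemma valAt {F : ℂ∞ → ℂ∞} (hF : Continuous F) {z₀ : ℂ} {g : ℂ → ℂ∞} {L : ℂ∞}
    (heq : ∀ᶠ z in (𝓝[≠] z₀ : Filter ℂ), F (OnePoint.some z) = g z) (hg : Tendsto g (𝓝[≠] z₀ : Filter ℂ) (nhds L)) :
    F z₀ = L := by
  have h1 : Tendsto (fun z : ℂ => F z) (𝓝[≠] z₀) (nhds (F z₀)) := by
    have : Tendsto (fun z : ℂ => F z) (nhds z₀) (nhds (F z₀)) :=
      (hF.tendsto _).comp (OnePoint.continuous_coe.tendsto z₀)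
    exact this.mono_left nhdsWithin_le_nhds
  exact tendsto_nhds_unique_of_eventuallyEq h1 hg heq

/-- value of a continuous map at ∞, from a cocompact limit -/
lemma valAtInf {F : ℂ∞ → ℂ∞} (hF : Continuous F) {g : ℂ → ℂ∞} {L : ℂ∞}
    (heq : ∀ᶠ z in cocompact ℂ, F (OnePoint.some z) = g z) (hg : Tendsto g (cocompact ℂ) (nhds L)) :
    F ∞ = L := by
  have h1 : Tendsto (fun z : ℂ => F z) (cocompact ℂ) (nhds (F ∞)) :=
    (hF.tendsto _).comp (OnePoint.tendsto_coe_infty.mono_left cocompact_le_coclosedCompact)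
  exact tendsto_nhds_unique_of_eventuallyEq h1 hg heq

/-- polynomial nonvanishing eventually (cofinite) -/
lemma evNZ {q : Polynomial ℂ} (hq : q ≠ 0) : ∀ᶠ z in cofinite, q.eval z ≠ 0 :=
  (Polynomial.finite_setOf_isRoot hq).eventually_cofinite_notMem

/-- nonvanishing near a (possibly deleted) point -/
lemma evNZpunct {q : Polynomial ℂ} (hq : q ≠ 0) (z₀ : ℂ) : ∀ᶠ z in 𝓝[≠] z₀, q.eval z ≠ 0 := by
  have hfin : ({x : ℂ | q.IsRoot x} \ {z₀}).Finite := (Polynomial.finite_setOf_isRoot hq).diff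
  have hopen : IsOpen (({x : ℂ | q.IsRoot x} \ {z₀})ᶜ) := hfin.isClosed.isOpen_compl
  have hmem : (({x : ℂ | q.IsRoot x} \ {z₀})ᶜ) ∈ 𝓝 z₀ :=
    hopen.mem_nhds (by simp)
  filter_upwards [nhdsWithin_le_nhds hmem, self_mem_nhdsWithin] with z hz hz'
  intro h
  exact hz ⟨h, hz'⟩

lemma evNZcocompact {q : Polynomial ℂ} (hq : q ≠ 0) : ∀ᶠ z in cocompact ℂ, q.eval z ≠ 0 :=
  (evNZ hq).filter_mono cocompact_le_cofinite

/-- coprime polynomials have no common root -/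
lemma no_common_root {p q : Polynomial ℂ} (h : IsCoprime p q) {z : ℂ}
    (hq : q.eval z = 0) : p.eval z ≠ 0 := by
  obtain ⟨u, v, huv⟩ := h
  intro hp
  have := congrArg (Polynomial.eval z) huv
  simp [hp, hq] at this


lemma constRat (c : ℂ∞) : IsRatMap (Function.const ℂ∞ c) := by
  refine ⟨continuous_const, ?_⟩
  cases c with
  | infty => exact Or.inl fun z => rfl
  | coe w =>
    refine Or.inr ⟨Polynomial.C w, 1, one_ne_zero, fun z _ => ?_⟩
    simp [Function.const]

lemma idRat : IsRatMap (id : ℂ∞ → ℂ∞) := by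
  refine ⟨continuous_id, Or.inr ⟨Polynomial.X, 1, one_ne_zero, fun z _ => ?_⟩⟩
  simp

lemma dense_image_cofinite {D : Set ℂ} (hD : D.Finite) :
    Dense (OnePoint.some '' Dᶜ) := by
  have h1 : Dense (Dᶜ : Set ℂ) := Set.Countable.dense_compl ℂ hD.countable
  intro x
  cases x with
  | infty =>
    -- ∞ in closure: every nbhd of ∞ contains coe of noncompact complement
    have : (∞ : ℂ∞) ∈ closure (Set.range (OnePoint.some : ℂ → ℂ∞)) := by
      have := OnePoint.denseRange_coe (X := ℂ)
      exact this ∞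
    -- use: some '' Dᶜ misses only a finite set of range coe;
    rw [mem_closure_iff_nhds]
    intro t ht
    rcases (OnePoint.hasBasis_nhds_infty.mem_iff.mp ht) with ⟨K, hK, hsub⟩
    -- ℂ \ (K ∪ D) nonempty
    have hne : (K ∪ D)ᶜ.Nonempty := by
      have hcomp : IsCompact (K ∪ D) := hK.2.union hD.isCompact
      have : K ∪ D ≠ Set.univ := by
        intro h
        exact (NoncompactSpace.noncompact_univ (X := ℂ)) (h ▸ hcomp)
      rcases Set.ne_univ_iff_exists_notMem _ |>.mp this with ⟨z, hz⟩
      exact ⟨z, hz⟩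
    rcases hne with ⟨z, hz⟩
    rw [Set.mem_compl_iff, Set.mem_union] at hz
    push_neg at hz
    refine ⟨OnePoint.some z, ?_, ⟨z, hz.2, rfl⟩⟩
    exact hsub (Or.inl ⟨z, hz.1, rfl⟩)
  | coe w =>
    have hw : w ∈ closure (Dᶜ : Set ℂ) := h1 w
    have : OnePoint.some w ∈ OnePoint.some '' closure (Dᶜ : Set ℂ) := ⟨w, hw, rfl⟩
    exact image_closure_subset_closure_image OnePoint.continuous_coe this

/-- a continuous map constant off finitely many finite points is constant -/
lemma const_of_cofinite {F : ℂ∞ → ℂ∞} (hF : Continuous F) {D : Set ℂ} (hD : D.Finite)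
    {c : ℂ∞} (h : ∀ z : ℂ, z ∉ D → F (OnePoint.some z) = c) :
    F = Function.const ℂ∞ c := by
  apply hF.ext_on (dense_image_cofinite hD) continuous_const
  rintro x ⟨z, hz, rfl⟩
  exact h z hz

/-- coprime normal form of a rational map -/
lemma coprime_rep {F : ℂ∞ → ℂ∞} (hF : Continuous F) {p q : Polynomial ℂ} (hq : q ≠ 0)
    (hrep : ∀ z : ℂ, q.eval z ≠ 0 → F (OnePoint.some z) = OnePoint.some (p.eval z / q.eval z)) :
    ∃ p' q' : Polynomial ℂ, IsCoprime p' q' ∧ q' ≠ 0 ∧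
      ∀ z : ℂ, q'.eval z ≠ 0 → F (OnePoint.some z) = OnePoint.some (p'.eval z / q'.eval z) := by
  set g := GCDMonoid.gcd p q with hg
  have hgz : g ≠ 0 := gcd_ne_zero_of_right hq
  set p' := p / g
  set q' := q / g
  have hq' : q' ≠ 0 := right_div_gcd_ne_zero hq
  have hcop : IsCoprime p' q' := isCoprime_div_gcd_div_gcd hq
  have hpe : p = g * p' := (EuclideanDomain.mul_div_cancel' hgz (gcd_dvd_left p q)).symm
  have hqe : q = g * q' := (EuclideanDomain.mul_div_cancel' hgz (gcd_dvd_right p q)).symm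
  refine ⟨p', q', hcop, hq', fun z hz => ?_⟩
  by_cases hgzz : g.eval z = 0
  · -- use continuity
    have hcont : Tendsto (fun w : ℂ => OnePoint.some (p'.eval w / q'.eval w)) (𝓝[≠] z)
        (nhds (OnePoint.some (p'.eval z / q'.eval z))) := by
      apply toc
      apply Tendsto.mono_left _ nhdsWithin_le_nhds
      exact ((p'.continuous.tendsto z).div (q'.continuous.tendsto z) hz)
    refine valAt hF ?_ hcont
    filter_upwards [evNZpunct hq z, evNZpunct hgz z] with w hw hgw
    rw [hrep w hw]
    congr 1
    rw [hpe, hqe]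
    simp only [Polynomial.eval_mul]
    rw [mul_div_mul_left _ _ hgw]
  · have hqz : q.eval z ≠ 0 := by
      rw [hqe]; simp only [Polynomial.eval_mul]; exact mul_ne_zero hgzz hz
    rw [hrep z hqz, hqe, hpe]
    simp only [Polynomial.eval_mul]
    rw [mul_div_mul_left _ _ hgzz]

lemma no_roots_constant {r : Polynomial ℂ} (h : ¬∃ z, r.eval z = 0) :
    r = Polynomial.C (r.coeff 0) := by
  apply Polynomial.eq_C_of_degree_le_zero
  by_contra hd
  push_neg at hd
  exact h (Complex.exists_root hd)

lemma surj_of_nonconst {F : ℂ∞ → ℂ∞} (hF : IsRatMap F)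
    (hnc : ¬∃ c : ℂ∞, F = Function.const ℂ∞ c) : Function.Surjective F := by
  obtain ⟨hcont, hd⟩ := hF
  rcases hd with hinf | ⟨p₀, q₀, hq₀, hrep₀⟩
  · exact absurd ⟨∞, funext hinf⟩ hnc
  obtain ⟨p, q, hcop, hq, hrep⟩ := coprime_rep hcont hq₀ hrep₀
  -- helper: F cannot be constant on the complement of the roots of q
  have hnotc : ∀ c : ℂ∞, ¬∀ z : ℂ, q.eval z ≠ 0 → F (OnePoint.some z) = c := by
    intro c hc
    exact hnc ⟨c, const_of_cofinite hcont (Polynomial.finite_setOf_isRoot hq)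
      (fun z hz => hc z hz)⟩
  intro w
  cases w with
  | coe w₀ =>
    set r := p - Polynomial.C w₀ * q with hr
    by_cases hr0 : r = 0
    · exfalso
      apply hnotc (OnePoint.some w₀)
      intro z hz
      rw [hrep z hz]
      have : p.eval z = w₀ * q.eval z := by
        have := congrArg (Polynomial.eval z) hr0.symm
        simp [hr] at this ⊢
        linear_combination -this
      rw [this, mul_div_assoc, div_self hz, mul_one]
    by_cases hroot : ∃ z, r.eval z = 0
    · obtain ⟨z₀, hz₀⟩ := hroot
      have hqz : q.eval z₀ ≠ 0 := by
        intro h0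
        have hp0 : p.eval z₀ = 0 := by
          have h4 : r.eval z₀ = p.eval z₀ - w₀ * q.eval z₀ := by simp [hr]
          rw [hz₀, h0, mul_zero, sub_zero] at h4
          exact h4.symm
        exact no_common_root hcop h0 hp0
      refine ⟨OnePoint.some z₀, ?_⟩
      rw [hrep z₀ hqz]
      have : p.eval z₀ = w₀ * q.eval z₀ := by
        have : r.eval z₀ = p.eval z₀ - w₀ * q.eval z₀ := by simp [hr]
        rw [hz₀] at this; linear_combination -this
      rw [this, mul_div_assoc, div_self hqz, mul_one]
    · -- r is a nonzero constant c
      have hrc : r = Polynomial.C (r.coeff 0) := no_roots_constant hroot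
      set c := r.coeff 0 with hc
      have hcne : c ≠ 0 := by
        intro h0; apply hr0; rw [hrc, h0, map_zero]
      by_cases hqd : 0 < q.degree
      · refine ⟨∞, ?_⟩
        apply valAtInf hcont (g := fun z => OnePoint.some (p.eval z / q.eval z))
        · filter_upwards [evNZcocompact hq] with z hz using hrep z hz
        · apply toc
          have h1 : Tendsto (fun z : ℂ => q.eval z) (cocompact ℂ) (Bornology.cobounded ℂ) :=
            tendsto_norm_atTop_iff_cobounded.mp
              (Polynomial.tendsto_norm_atTop q hqd tendsto_norm_cocompact_atTop)
        -- p z / q z = w₀ + c * (q z)⁻¹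
          have h2 : Tendsto (fun z : ℂ => w₀ + c * (q.eval z)⁻¹) (cocompact ℂ) (nhds w₀) := by
            have : Tendsto (fun z : ℂ => (q.eval z)⁻¹) (cocompact ℂ) (nhds 0) :=
              tendsto_inv₀_cobounded.comp h1
            simpa using tendsto_const_nhds.add (this.const_mul c)
          apply h2.congr'
          filter_upwards [evNZcocompact hq] with z hz
          have hp : p.eval z = w₀ * q.eval z + c := by
            have : r.eval z = p.eval z - w₀ * q.eval z := by simp [hr]
            have h3 : r.eval z = c := by rw [hrc]; simp
            rw [h3] at this; linear_combination -this
          rw [hp]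
          field_simp
      · exfalso
        -- q constant, p constant
        push_neg at hqd
        have hqc : q = Polynomial.C (q.coeff 0) := Polynomial.eq_C_of_degree_le_zero hqd
        have hq0 : q.coeff 0 ≠ 0 := by
          intro h0; apply hq; rw [hqc, h0, map_zero]
        apply hnotc (OnePoint.some (p.eval 0 / q.eval 0))
        intro z hz
        rw [hrep z hz]
        have hpz : ∀ t : ℂ, p.eval t = w₀ * q.coeff 0 + c := by
          intro t
          have h3 : r.eval t = c := by rw [hrc]; simp
          have : r.eval t = p.eval t - w₀ * q.eval t := by simp [hr]
          rw [h3, hqc] at this; simp at this; linear_combination -this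
        rw [hpz z, hpz 0, hqc]; simp
  | infty =>
    by_cases hqroot : ∃ z₀, q.eval z₀ = 0
    · obtain ⟨z₀, hz₀⟩ := hqroot
      have hpz : p.eval z₀ ≠ 0 := no_common_root hcop hz₀
      refine ⟨OnePoint.some z₀, ?_⟩
      apply valAt hcont (g := fun z => OnePoint.some (p.eval z / q.eval z))
      · filter_upwards [evNZpunct hq z₀] with z hz using hrep z hz
      · apply toe
        have h1 : Tendsto (fun z : ℂ => ‖p.eval z‖) (𝓝[≠] z₀) (nhds ‖p.eval z₀‖) :=
          ((p.continuous.tendsto z₀).norm).mono_left nhdsWithin_le_nhds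
        have h2 : Tendsto (fun z : ℂ => ‖q.eval z‖⁻¹) (𝓝[≠] z₀) atTop := by
          apply tendsto_inv_nhdsGT_zero.comp
          rw [tendsto_nhdsWithin_iff]
          constructor
          · have := (q.continuous.tendsto z₀).norm
            rw [hz₀, norm_zero] at this
            exact this.mono_left nhdsWithin_le_nhds
          · filter_upwards [evNZpunct hq z₀] with z hz using by simpa [norm_pos_iff] using hz
        have h3 : Tendsto (fun z : ℂ => ‖p.eval z‖ * ‖q.eval z‖⁻¹) (𝓝[≠] z₀) atTop :=
          Filter.Tendsto.pos_mul_atTop (norm_pos_iff.mpr hpz) h1 h2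
        apply h3.congr
        intro z
        rw [norm_div, div_eq_mul_inv]
    · have hqc : q = Polynomial.C (q.coeff 0) := no_roots_constant hqroot
      have hq0 : q.coeff 0 ≠ 0 := by
        intro h0; apply hq; rw [hqc, h0, map_zero]
      by_cases hpd : 0 < p.degree
      · refine ⟨∞, ?_⟩
        apply valAtInf hcont (g := fun z => OnePoint.some (p.eval z / q.eval z))
        · filter_upwards [evNZcocompact hq] with z hz using hrep z hz
        · apply toe
          have h1 : Tendsto (fun z : ℂ => ‖p.eval z‖ / ‖q.coeff 0‖) (cocompact ℂ) atTop :=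
            Tendsto.atTop_div_const (norm_pos_iff.mpr hq0)
              (Polynomial.tendsto_norm_atTop p hpd tendsto_norm_cocompact_atTop)
        -- rewrite
          apply h1.congr
          intro z
          rw [hqc]
          simp [norm_div]
      · exfalso
        push_neg at hpd
        have hpc : p = Polynomial.C (p.coeff 0) := Polynomial.eq_C_of_degree_le_zero hpd
        apply hnotc (OnePoint.some (p.coeff 0 / q.coeff 0))
        intro z hz
        rw [hrep z hz, hqc, hpc]
        simp

lemma inj_linear {F : ℂ∞ → ℂ∞} (hinj : Function.Injective F)
    {p q : Polynomial ℂ} (hcop : IsCoprime p q) (hq : q ≠ 0)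
    (hrep : ∀ z : ℂ, q.eval z ≠ 0 → F (OnePoint.some z) = OnePoint.some (p.eval z / q.eval z)) :
    p.natDegree ≤ 1 ∧ q.natDegree ≤ 1 := by
  by_contra hcon
  -- so max degree ≥ 2
  have hd2 : 2 ≤ max p.natDegree q.natDegree := by
    rcases not_and_or.mp hcon with h | h
    · exact le_trans (by omega) (le_max_left _ _)
    · exact le_trans (by omega) (le_max_right _ _)
  set d := max p.natDegree q.natDegree with hdd
  have hp0 : p ≠ 0 := by
    intro h0
    rw [h0] at hcop
    have := Polynomial.natDegree_eq_zero_of_isUnit (isCoprime_zero_left.mp hcop)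
    simp [h0, this] at hdd
    omega
  -- Wronskian
  set W := Polynomial.derivative p * q - p * Polynomial.derivative q with hW
  have hWne : W ≠ 0 := by
    intro h0
    have hpq : Polynomial.derivative p * q = p * Polynomial.derivative q := by
      have := sub_eq_zero.mp (hW ▸ h0)
      exact this
    have hpdeg : p.natDegree = 0 := by
      by_contra hnd
      have hdvd : p ∣ Polynomial.derivative p * q := ⟨Polynomial.derivative q, hpq⟩
      
      have hdvd2 : p ∣ Polynomial.derivative p :=
        hcop.dvd_of_dvd_mul_right hdvd
      have hderne : Polynomial.derivative p ≠ 0 := by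
        intro hz
        exact hnd (Polynomial.natDegree_eq_zero_of_derivative_eq_zero hz)
      have h1 := Polynomial.natDegree_le_of_dvd hdvd2 hderne
      have h2 := Polynomial.natDegree_derivative_lt hnd
      omega
    have hqdeg : q.natDegree = 0 := by
      by_contra hnd
      have hdvd : q ∣ p * Polynomial.derivative q := ⟨Polynomial.derivative p, by
        rw [← hpq]; ring⟩
      have hdvd2 : q ∣ Polynomial.derivative q :=
        (hcop.symm).dvd_of_dvd_mul_left hdvd
      have hderne : Polynomial.derivative q ≠ 0 := by
        intro hz
        exact hnd (Polynomial.natDegree_eq_zero_of_derivative_eq_zero hz)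
      have h1 := Polynomial.natDegree_le_of_dvd hdvd2 hderne
      have h2 := Polynomial.natDegree_derivative_lt hnd
      omega
    omega
  -- bad values
  classical
  set B : Finset ℂ := W.roots.toFinset ∪ q.roots.toFinset with hB
  set V : Finset ℂ := B.image (fun z => p.eval z / q.eval z) ∪
      {p.leadingCoeff / q.leadingCoeff, 0} with hV
  obtain ⟨w₀, hw₀⟩ := Infinite.exists_notMem_finset V
  have hw₀0 : w₀ ≠ 0 := by
    intro h; exact hw₀ (by simp [hV, h])
  have hw₀lc : w₀ ≠ p.leadingCoeff / q.leadingCoeff := by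
    intro h; exact hw₀ (by simp [hV, h])
  have hw₀B : ∀ z ∈ B, q.eval z ≠ 0 → w₀ ≠ p.eval z / q.eval z := by
    intro z hz _ h
    exact hw₀ (by
      rw [hV]
      apply Finset.mem_union_left
      exact Finset.mem_image.mpr ⟨z, hz, h.symm⟩)
  set r := p - Polynomial.C w₀ * q with hr
  -- degree of r is d ≥ 2
  have hrd : d ≤ r.natDegree := by
    have hcoeff : r.coeff d = p.coeff d - w₀ * q.coeff d := by simp [hr]
    apply Polynomial.le_natDegree_of_ne_zero
    rw [hcoeff]
    rcases lt_trichotomy p.natDegree q.natDegree with hlt | heq | hgt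
    · have hdq : d = q.natDegree := by omega
      have h1 : p.coeff d = 0 := Polynomial.coeff_eq_zero_of_natDegree_lt (by omega)
      rw [h1, hdq]
      simp only [zero_sub, neg_ne_zero]
      exact mul_ne_zero hw₀0 (by
        rw [← Polynomial.leadingCoeff]
        exact Polynomial.leadingCoeff_ne_zero.mpr hq)
    · have hdp : d = p.natDegree := by omega
      have hcp : p.coeff d = p.leadingCoeff := by rw [Polynomial.leadingCoeff, hdp]
      have hcq : q.coeff d = q.leadingCoeff := by rw [Polynomial.leadingCoeff, hdp, heq]
      intro hcontr
      apply hw₀lc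
      rw [hcp, hcq] at hcontr
      have hlcq : q.leadingCoeff ≠ 0 := Polynomial.leadingCoeff_ne_zero.mpr hq
      rw [eq_div_iff hlcq]
      linear_combination -hcontr
    · have hdp : d = p.natDegree := by omega
      have h1 : q.coeff d = 0 := Polynomial.coeff_eq_zero_of_natDegree_lt (by omega)
      rw [h1, mul_zero, sub_zero, hdp, ← Polynomial.leadingCoeff]
      exact Polynomial.leadingCoeff_ne_zero.mpr hp0
  have hrne : r ≠ 0 := by
    intro h0
    rw [h0] at hrd
    simp at hrd
    omega
  -- roots of r
  have hcard : 2 ≤ Multiset.card r.roots := by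
    have h9 : r.roots.card = r.natDegree :=
      Polynomial.splits_iff_card_roots.mp (IsAlgClosed.splits r)
    omega
  obtain ⟨a, ha⟩ := (Multiset.card_pos_iff_exists_mem (s := r.roots)).mp (by omega)
  obtain ⟨t, ht⟩ := Multiset.exists_cons_of_mem ha
  have htcard : 1 ≤ Multiset.card t := by
    rw [ht] at hcard
    simp at hcard
    omega
  obtain ⟨b, hb⟩ := (Multiset.card_pos_iff_exists_mem (s := t)).mp (by omega)
  have hbr : b ∈ r.roots := by rw [ht]; exact Multiset.mem_cons_of_mem hb
  have hra : r.eval a = 0 := Polynomial.isRoot_of_mem_roots ha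
  have hrb : r.eval b = 0 := Polynomial.isRoot_of_mem_roots hbr
  -- common root exclusion
  have hqne : ∀ z : ℂ, r.eval z = 0 → q.eval z ≠ 0 := by
    intro z hz h0
    have hp : p.eval z = 0 := by
      have : r.eval z = p.eval z - w₀ * q.eval z := by simp [hr]
      rw [hz, h0, mul_zero, sub_zero] at this
      exact this.symm
    exact no_common_root hcop h0 hp
  have hFval : ∀ z : ℂ, r.eval z = 0 → F (OnePoint.some z) = OnePoint.some w₀ := by
    intro z hz
    rw [hrep z (hqne z hz)]
    congr 1
    have : p.eval z = w₀ * q.eval z := by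
      have h4 : r.eval z = p.eval z - w₀ * q.eval z := by simp [hr]
      rw [hz] at h4
      linear_combination -h4
    rw [this, mul_div_assoc, div_self (hqne z hz), mul_one]
  by_cases hab : a = b
  · -- multiple root: a is a root of derivative r, hence of W; contradiction with choice of w₀
    have hcount : 2 ≤ r.roots.count a := by
      rw [ht]
      subst hab
      simp [Multiset.count_cons_self]
      exact Multiset.one_le_count_iff_mem.mpr hb
    rw [Polynomial.count_roots] at hcount
    have hdvd : (Polynomial.X - Polynomial.C a) ^ 2 ∣ r := by
      calc (Polynomial.X - Polynomial.C a) ^ 2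
          ∣ (Polynomial.X - Polynomial.C a) ^ (r.rootMultiplicity a) := pow_dvd_pow _ hcount
        _ ∣ r := r.pow_rootMultiplicity_dvd a
    obtain ⟨u, hu⟩ := hdvd
    have hder : (Polynomial.derivative r).eval a = 0 := by
      rw [hu]
      simp [Polynomial.derivative_mul, Polynomial.derivative_pow]
    -- a is a root of W
    have hWa : W.eval a = 0 := by
      have h4 : p.eval a = w₀ * q.eval a := by
        have h5 : r.eval a = p.eval a - w₀ * q.eval a := by simp [hr]
        rw [hra] at h5
        linear_combination -h5
      have h6 : (Polynomial.derivative p).eval a = w₀ * (Polynomial.derivative q).eval a := by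
        have h7 : (Polynomial.derivative r).eval a
            = (Polynomial.derivative p).eval a - w₀ * (Polynomial.derivative q).eval a := by
          simp [hr, Polynomial.derivative_sub, Polynomial.derivative_mul]
        rw [hder] at h7
        linear_combination -h7
      simp only [hW, Polynomial.eval_sub, Polynomial.eval_mul]
      rw [h4, h6]
      ring
    have haB : a ∈ B := by
      rw [hB]
      apply Finset.mem_union_left
      rw [Multiset.mem_toFinset]
      exact Polynomial.mem_roots_iff_aeval_eq_zero (by exact hWne) |>.mpr (by simpa using hWa)
    apply hw₀B a haB (hqne a hra)
    have h4 : p.eval a = w₀ * q.eval a := by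
      have h5 : r.eval a = p.eval a - w₀ * q.eval a := by simp [hr]
      rw [hra] at h5
      linear_combination -h5
    rw [h4, mul_div_assoc, div_self (hqne a hra), mul_one]
  · -- two distinct roots: contradiction with injectivity
    have h1 := hFval a hra
    have h2 := hFval b hrb
    have := hinj (h1.trans h2.symm)
    rw [OnePoint.coe_eq_coe] at this
    exact hab this

lemma sphDeg_one_of_injective {F : ℂ∞ → ℂ∞} (hinj : Function.Injective F) :
    sphDeg F = 1 := by
  have hub : ∀ n ∈ {n : ℕ | ∃ y : ℂ∞, ∃ s : Finset ℂ∞, s.card = n ∧ ∀ z ∈ s, F z = y},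
      n ≤ 1 := by
    rintro n ⟨y, s, rfl, hall⟩
    apply Finset.card_le_one.mpr
    intro u hu v hv
    exact hinj ((hall u hu).trans (hall v hv).symm)
  have hmem : 1 ∈ {n : ℕ | ∃ y : ℂ∞, ∃ s : Finset ℂ∞, s.card = n ∧ ∀ z ∈ s, F z = y} :=
    ⟨F ∞, {∞}, Finset.card_singleton _, by simp⟩
  apply le_antisymm
  · exact csSup_le ⟨1, hmem⟩ hub
  · exact le_csSup ⟨1, hub⟩ hmem

lemma mobius_of_bijective {F : ℂ∞ → ℂ∞} (hF : IsRatMap F) (hbij : Function.Bijective F) :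
    ∃ N : ℂ∞ ≃ ℂ∞, IsMobius N ∧ F = ⇑N := by
  rcases hF.2 with hinf | ⟨p₀, q₀, hq₀, hrep₀⟩
  · exfalso
    have h01 : F (OnePoint.some 0) = F (OnePoint.some 1) := by rw [hinf, hinf]
    have := OnePoint.coe_eq_coe.mp (hbij.1 h01)
    exact zero_ne_one this
  obtain ⟨p, q, hcop, hq, hrep⟩ := coprime_rep hF.1 hq₀ hrep₀
  obtain ⟨hp1, hq1⟩ := inj_linear hbij.1 hcop hq hrep
  set a := p.coeff 1 with hadef
  set b := p.coeff 0 with hbdef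
  set c := q.coeff 1 with hcdef
  set e := q.coeff 0 with hedef
  have hp : p = Polynomial.C a * Polynomial.X + Polynomial.C b :=
    Polynomial.eq_X_add_C_of_natDegree_le_one hp1
  have hqq : q = Polynomial.C c * Polynomial.X + Polynomial.C e :=
    Polynomial.eq_X_add_C_of_natDegree_le_one hq1
  have pe : ∀ z : ℂ, p.eval z = a * z + b := by intro z; rw [hp]; simp
  have qe : ∀ z : ℂ, q.eval z = c * z + e := by intro z; rw [hqq]; simp
  have hdet : a * e - b * c ≠ 0 := by
    intro h0
    obtain ⟨z₁, hz₁, z₂, hz₂, hne⟩ :=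
      ((Polynomial.finite_setOf_isRoot hq).infinite_compl).nontrivial
    have hqz₁ : q.eval z₁ ≠ 0 := hz₁
    have hqz₂ : q.eval z₂ ≠ 0 := hz₂
    have e1 : F (OnePoint.some z₁) = F (OnePoint.some z₂) := by
      rw [hrep z₁ hqz₁, hrep z₂ hqz₂]
      congr 1
      rw [div_eq_div_iff hqz₁ hqz₂, pe, pe, qe, qe]
      linear_combination (z₁ - z₂) * h0
    exact hne (OnePoint.coe_eq_coe.mp (hbij.1 e1))
  set N := Equiv.ofBijective F hbij with hN
  have hNF : F = ⇑N := rfl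
  have hNcont : Continuous ⇑N := hF.1
  have hsymm : Continuous ⇑N.symm := by
    exact (Continuous.homeoOfEquivCompactToT2 (f := N) hNcont).symm.continuous
  refine ⟨N, ⟨⟨hNcont, hF.2⟩, ⟨hsymm, Or.inr ?_⟩⟩, hNF⟩
  refine ⟨Polynomial.C e * Polynomial.X - Polynomial.C b,
    -(Polynomial.C c) * Polynomial.X + Polynomial.C a, ?_, ?_⟩
  · -- nonzero
    intro h0
    apply hdet
    have h1 : a = 0 := by
      have := congrArg (fun r => Polynomial.coeff r 0) h0
      simpa using this
    have h2 : c = 0 := by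
      have := congrArg (fun r => Polynomial.coeff r 1) h0
      simpa using this
    rw [h1, h2]
    ring
  · intro z hz
    have hD : a - c * z ≠ 0 := by
      intro h0
      apply hz
      simp
      linear_combination h0
    set w := (e * z - b) / (a - c * z) with hw
    have hcw : q.eval w ≠ 0 := by
      rw [qe, hw]
      have hval : c * ((e * z - b) / (a - c * z)) + e = (a * e - b * c) / (a - c * z) := by
        field_simp
        ring
      rw [hval]
      exact div_ne_zero hdet hD
    have hFw : F (OnePoint.some w) = OnePoint.some z := by
      rw [hrep w hcw]
      congr 1
      rw [pe, qe, div_eq_iff (by rw [← qe w]; exact hcw), hw]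
      have hD' : a - z * c ≠ 0 := by rwa [mul_comm z c]
      field_simp
      ring
    have : N.symm (OnePoint.some z) = OnePoint.some w := by
      rw [Equiv.symm_apply_eq]
      exact (hNF ▸ hFw).symm
    rw [this]
    congr 1
    rw [hw]
    congr 1 <;> simp <;> ring

/-- if `ρ` is a sandwich-semigroup isomorphism
`(Rat, *_{R₁}) → (Rat, *_{R₂})` between the sandwich semigroups associated with
nonconstant rational maps `R₁, R₂` (its restriction to the constants being the
bijection `f` of `ℂ∞`), then for every Möbius transformation `M ∈ PSL(2,ℂ)` the
image `ρ(M)` is a rational map of degree `1`, i.e. a Möbius transformation. -/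
theorem iso_image_of_mobius_is_mobius
    (R₁ R₂ : OnePoint ℂ → OnePoint ℂ) (hR₁ : IsRatMap R₁) (hR₂ : IsRatMap R₂)
    (hnc₁ : ¬ ∃ c : OnePoint ℂ, R₁ = Function.const (OnePoint ℂ) c)
    (hnc₂ : ¬ ∃ c : OnePoint ℂ, R₂ = Function.const (OnePoint ℂ) c)
    (ρ ρ' : (OnePoint ℂ → OnePoint ℂ) → (OnePoint ℂ → OnePoint ℂ))
    (hρmaps : ∀ R, IsRatMap R → IsRatMap (ρ R))
    (hρ'maps : ∀ R, IsRatMap R → IsRatMap (ρ' R))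
    (hinv : ∀ R, IsRatMap R → ρ' (ρ R) = R)
    (hinv' : ∀ R, IsRatMap R → ρ (ρ' R) = R)
    (hhom : ∀ R Q, IsRatMap R → IsRatMap Q → ρ (R ∘ R₁ ∘ Q) = ρ R ∘ R₂ ∘ ρ Q)
    (hhom' : ∀ R Q, IsRatMap R → IsRatMap Q → ρ' (R ∘ R₂ ∘ Q) = ρ' R ∘ R₁ ∘ ρ' Q)
    (f : OnePoint ℂ → OnePoint ℂ) (hf : Function.Bijective f)
    (hρconst : ∀ x : OnePoint ℂ,
      ρ (Function.const (OnePoint ℂ) x) = Function.const (OnePoint ℂ) (f x))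
    (M : OnePoint ℂ ≃ OnePoint ℂ) (hM : IsMobius M) :
    IsRatMap (ρ ⇑M) ∧ sphDeg (ρ ⇑M) = 1 ∧
      ∃ N : OnePoint ℂ ≃ OnePoint ℂ, IsMobius N ∧ ρ ⇑M = ⇑N := by
  have hMrat : IsRatMap ⇑M := hM.1
  have hρM : IsRatMap (ρ ⇑M) := hρmaps _ hMrat
  set f' := Function.invFun f with hf'def
  have hfl : Function.LeftInverse f' f := Function.leftInverse_invFun hf.1
  have hfr : Function.RightInverse f' f := Function.rightInverse_invFun hf.2
  -- key single-evaluation relation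
  have star : ∀ (N : OnePoint ℂ → OnePoint ℂ), IsRatMap N →
      ∀ x, ρ N (R₂ (f x)) = f (N (R₁ x)) := by
    intro N hN x
    have h1 := hhom N (Function.const (OnePoint ℂ) x) hN (constRat x)
    have h2 : N ∘ R₁ ∘ Function.const (OnePoint ℂ) x
        = Function.const (OnePoint ℂ) (N (R₁ x)) := rfl
    rw [h2] at h1
    simp only [hρconst] at h1
    exact (congrFun h1 ∞).symm
  have hρ'const : ∀ y, ρ' (Function.const (OnePoint ℂ) y)
      = Function.const (OnePoint ℂ) (f' y) := by
    intro y
    have h3 : ρ' (Function.const (OnePoint ℂ) (f (f' y)))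
        = Function.const (OnePoint ℂ) (f' y) := by
      rw [← hρconst (f' y)]
      exact hinv _ (constRat _)
    rwa [hfr y] at h3
  have star' : ∀ (N : OnePoint ℂ → OnePoint ℂ), IsRatMap N →
      ∀ y, ρ' N (R₁ (f' y)) = f' (N (R₂ y)) := by
    intro N hN y
    have h1 := hhom' N (Function.const (OnePoint ℂ) y) hN (constRat y)
    have h2 : N ∘ R₂ ∘ Function.const (OnePoint ℂ) y
        = Function.const (OnePoint ℂ) (N (R₂ y)) := rfl
    rw [h2] at h1
    simp only [hρ'const] at h1
    exact (congrFun h1 ∞).symm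
  set E := ρ (id : OnePoint ℂ → OnePoint ℂ) with hEdef
  set E' := ρ' (id : OnePoint ℂ → OnePoint ℂ) with hE'def
  have hE : ∀ x, E (R₂ (f x)) = f (R₁ x) := fun x => star id idRat x
  have hE' : ∀ y, E' (R₁ (f' y)) = f' (R₂ y) := fun y => star' id idRat y
  have hR₁s : Function.Surjective R₁ := surj_of_nonconst hR₁ hnc₁
  have hR₂s : Function.Surjective R₂ := surj_of_nonconst hR₂ hnc₂
  have step1 : ∀ x, R₂ (f x) = f (E' (R₁ x)) := by
    intro x
    have h1 := hE' (f x)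
    rw [hfl x] at h1
    have h2 := congrArg f h1
    rw [hfr (R₂ (f x))] at h2
    exact h2.symm
  have I1 : ∀ u, E (f (E' u)) = f u := by
    intro u
    obtain ⟨x, rfl⟩ := hR₁s u
    rw [← step1 x, hE x]
  have step3 : ∀ y, R₁ (f' y) = f' (E (R₂ y)) := by
    intro y
    have h1 := hE (f' y)
    rw [hfr y] at h1
    have h2 := congrArg f' h1
    rw [hfl (R₁ (f' y))] at h2
    exact h2.symm
  have I2 : ∀ v, E' (f' (E v)) = f' v := by
    intro v
    obtain ⟨y, rfl⟩ := hR₂s v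
    rw [← step3 y, hE' y]
  have hE's : Function.Surjective E' := by
    intro t
    refine ⟨f' (E (f t)), ?_⟩
    rw [I2 (f t), hfl t]
  have III : ∀ u, ρ ⇑M (f (E' u)) = f (M u) := by
    intro u
    obtain ⟨x, rfl⟩ := hR₁s u
    rw [← step1 x]
    exact star ⇑M hMrat x
  have hsurj : Function.Surjective (ρ ⇑M) := by
    intro t
    obtain ⟨s, hs⟩ := hf.2 t
    refine ⟨f (E' (M.symm s)), ?_⟩
    rw [III (M.symm s), Equiv.apply_symm_apply, hs]
  have hinjM : Function.Injective (ρ ⇑M) := by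
    intro s₁ s₂ hss
    obtain ⟨u₁, hu₁⟩ : ∃ u, f (E' u) = s₁ := by
      obtain ⟨w, hw⟩ := hE's (f' s₁)
      exact ⟨w, by rw [hw, hfr s₁]⟩
    obtain ⟨u₂, hu₂⟩ : ∃ u, f (E' u) = s₂ := by
      obtain ⟨w, hw⟩ := hE's (f' s₂)
      exact ⟨w, by rw [hw, hfr s₂]⟩
    rw [← hu₁, ← hu₂, III, III] at hss
    have h5 := M.injective (hf.1 hss)
    rw [← hu₁, ← hu₂, h5]
  exact ⟨hρM, sphDeg_one_of_injective hinjM,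
    mobius_of_bijective hρM ⟨hinjM, hsurj⟩⟩
end
end
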